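/- Let π: S → S̄ be the blow-down of a (-1)-curve E which is a component of an anti-canonical cycle C = C_1 + ... + C_k on S (with C_k = E), and let C̄ = C̄_1 + ... + C̄_{k-1} be the image cycle on S̄. Then the intersection matrix (C_i·C_j)_{1≤i,j≤k} on S is negative definite if and only if the intersection matrix (C̄_i·C̄_j)_{1≤i,j≤k-1} on S̄ is negative definite. -/

import Mathlib

/-- Blow-down of a `(-1)`-curve `E = C_k` which is a component of an anticanonical
cycle `C = C_1 + … + C_k` on a smooth rational surface `S`, with image cycle
`C̄ = C̄_1 + … + C̄_{k-1}` on `S̄`.  `M` is the intersection matrix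
`(C_i · C_j)_{1≤i,j≤k}` on `S` and `Mbar` the intersection matrix
`(C̄_i · C̄_j)_{1≤i,j≤k-1}` on `S̄`; they are related by
`C_1² = C̄_1² - 1`, `C_{k-1}² = C̄_{k-1}² - 1`, `C_1·C_{k-1} = 0` while
`C̄_1·C̄_{k-1} = 1`, and the extra row/column for `C_k` has its only nonzero entries
`C_1·C_k = C_{k-1}·C_k = 1` and `C_k² = -1`.  Then `M` is negative definite iff
`Mbar` is negative definite.  (Index `a` corresponds to `C_1`, index `b` to
`C_{k-1}`, index `e` to `C_k = E`; `cst` is the inclusion of indices.) -/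
theorem stmt_8
    (k : ℕ) (hk : 3 ≤ k)
    (Mbar : Matrix (Fin (k - 1)) (Fin (k - 1)) ℤ)
    (M : Matrix (Fin k) (Fin k) ℤ)
    (hMbarSymm : Mbar.IsSymm) (hMSymm : M.IsSymm)
    (a b : Fin (k - 1)) (ha : (a : ℕ) = 0) (hb : (b : ℕ) = k - 2)
    (e : Fin k) (he : (e : ℕ) = k - 1)
    (cst : Fin (k - 1) → Fin k) (hcst : cst = Fin.castLE (Nat.sub_le k 1))
    (hab : Mbar a b = 1)                   -- C̄_1 · C̄_{k-1} = 1
    (h0 : ∀ i j : Fin (k - 1),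
      ¬((i = a ∨ i = b) ∧ (j = a ∨ j = b)) → M (cst i) (cst j) = Mbar i j)
    (h1 : M (cst a) (cst a) = Mbar a a - 1)   -- C_1² = C̄_1² - 1
    (h2 : M (cst b) (cst b) = Mbar b b - 1)   -- C_{k-1}² = C̄_{k-1}² - 1
    (h3 : M (cst a) (cst b) = 0)              -- C_1 · C_{k-1} = 0
    (h4 : M e e = -1)                         -- C_k² = -1
    (h5 : M (cst a) e = 1)                    -- C_1 · C_k = 1
    (h6 : M (cst b) e = 1)                    -- C_{k-1} · C_k = 1
    (h7 : ∀ i : Fin (k - 1), i ≠ a → i ≠ b → M (cst i) e = 0) :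
    ((∀ x : Fin k → ℚ, x ≠ 0 →
        dotProduct x ((M.map (Int.cast : ℤ → ℚ)).mulVec x) < 0) ↔
     (∀ x : Fin (k - 1) → ℚ, x ≠ 0 →
        dotProduct x ((Mbar.map (Int.cast : ℤ → ℚ)).mulVec x) < 0)) := by
  obtain ⟨m, rfl⟩ : ∃ m, k = m + 1 := ⟨k - 1, by omega⟩
  have hm : 2 ≤ m := by omega
  have he' : e = Fin.last m := Fin.ext (by simpa using he)
  subst he'
  have hcs : ∀ i : Fin m, cst i = Fin.castSucc i := by
    intro i; rw [hcst]; rfl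
  simp only [hcs] at h0 h1 h2 h3 h5 h6 h7
  have hanb : a ≠ b := by
    intro h; rw [h] at ha; rw [ha] at hb; omega
  -- the correction vector
  set g : Fin m → ℚ := fun i => (if i = a then 1 else 0) + (if i = b then 1 else 0) with hg
  have hga : g a = 1 := by simp [hg, hanb]
  have hgb : g b = 1 := by simp [hg, hanb.symm]
  have hgo : ∀ i : Fin m, i ≠ a → i ≠ b → g i = 0 := by
    intro i hia hib; simp [hg, hia, hib]
  have hQ1 : ∀ i j : Fin m,
      ((M i.castSucc j.castSucc : ℤ) : ℚ) = ((Mbar i j : ℤ) : ℚ) - g i * g j := by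
    intro i j
    rcases eq_or_ne i a with ria | ria
    · subst ria
      rcases eq_or_ne j i with rja | rja
      · subst rja; rw [h1, hga]; push_cast; ring
      rcases eq_or_ne j b with rjb | rjb
      · subst rjb; rw [h3, hab, hga, hgb]; push_cast; ring
      · rw [h0 _ _ (by tauto), hgo j rja rjb]; push_cast; ring
    rcases eq_or_ne i b with rib | rib
    · subst rib
      rcases eq_or_ne j a with rja | rja
      · subst rja
        have hs : M i.castSucc j.castSucc = M j.castSucc i.castSucc :=
          hMSymm.apply _ _
        have hs' : Mbar i j = Mbar j i := hMbarSymm.apply _ _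
        rw [hs, h3, hs', hab, hga, hgb]; push_cast; ring
      rcases eq_or_ne j i with rjb | rjb
      · subst rjb; rw [h2, hgb]; push_cast; ring
      · rw [h0 _ _ (by tauto), hgo j rja rjb]; push_cast; ring
    · rw [h0 _ _ (by tauto), hgo i ria rib]; push_cast; ring
  have hQ2 : ∀ i : Fin m, ((M i.castSucc (Fin.last m) : ℤ) : ℚ) = g i := by
    intro i
    rcases eq_or_ne i a with ria | ria
    · subst ria; rw [h5, hga]; norm_num
    rcases eq_or_ne i b with rib | rib
    · subst rib; rw [h6, hgb]; norm_num
    · rw [h7 i ria rib, hgo i ria rib]; norm_num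
  have hQ3 : ∀ j : Fin m, ((M (Fin.last m) j.castSucc : ℤ) : ℚ) = g j := by
    intro j; rw [hMSymm.apply]; exact hQ2 j
  have hQ4 : ((M (Fin.last m) (Fin.last m) : ℤ) : ℚ) = -1 := by rw [h4]; norm_num
  have hdot : ∀ y : Fin (m + 1 - 1) → ℚ,
      dotProduct y ((Mbar.map (Int.cast : ℤ → ℚ)).mulVec y)
      = ∑ i : Fin m, y i * ∑ j : Fin m, ((Mbar i j : ℤ) : ℚ) * y j := fun y => rfl
  -- key quadratic-form identity
  have key : ∀ x : Fin (m + 1) → ℚ,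
      dotProduct x ((M.map (Int.cast : ℤ → ℚ)).mulVec x)
      = dotProduct (fun i : Fin m => x i.castSucc)
          ((Mbar.map (Int.cast : ℤ → ℚ)).mulVec (fun i : Fin m => x i.castSucc))
        - (x a.castSucc + x b.castSucc - x (Fin.last m)) ^ 2 := by
    intro x
    have hS : (∑ j : Fin m, g j * x j.castSucc) = x a.castSucc + x b.castSucc := by
      simp [hg, add_mul, ite_mul, Finset.sum_add_distrib, Finset.sum_ite_eq',
        hanb]
    rw [hdot]
    simp only [dotProduct, Matrix.mulVec, Matrix.map_apply,
      Fin.sum_univ_castSucc, hQ1, hQ2, hQ3, hQ4]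
    have hsplit : ∀ i : Fin m,
        (∑ j : Fin m, (((Mbar i j : ℤ) : ℚ) - g i * g j) * x j.castSucc)
        = (∑ j : Fin m, ((Mbar i j : ℤ) : ℚ) * x j.castSucc)
          - g i * (∑ j : Fin m, g j * x j.castSucc) := by
      intro i
      rw [Finset.mul_sum, ← Finset.sum_sub_distrib]
      exact Finset.sum_congr rfl fun j _ => by ring
    simp only [hsplit, hS]
    set S := x a.castSucc + x b.castSucc
    set t := x (Fin.last m)
    have step : ∀ i : Fin m,
        x i.castSucc * ((∑ j : Fin m, ((Mbar i j : ℤ) : ℚ) * x j.castSucc)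
          - g i * S + g i * t)
        = x i.castSucc * (∑ j : Fin m, ((Mbar i j : ℤ) : ℚ) * x j.castSucc)
          + (g i * x i.castSucc) * (t - S) := by
      intro i; ring
    simp only [step, Finset.sum_add_distrib, ← Finset.sum_mul]
    rw [show (∑ i : Fin m, g i * x i.castSucc) = S from hS]
    ring
  constructor
  · intro h y hy
    set x : Fin (m + 1) → ℚ := Fin.snoc y (y a + y b) with hxdef
    have hyx : (fun i : Fin m => x i.castSucc) = y := by
      funext i; simp [hxdef]
    have hxne : x ≠ 0 := by
      intro h0x
      apply hy
      funext i
      have : x i.castSucc = 0 := by rw [h0x]; rfl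
      simpa [hxdef] using this
    have hlt := h x hxne
    rw [key x, hyx] at hlt
    have hxa : x a.castSucc = y a := by simp [hxdef]
    have hxb : x b.castSucc = y b := by simp [hxdef]
    have hxl : x (Fin.last m) = y a + y b := by simp [hxdef]
    rw [hxa, hxb, hxl] at hlt
    simpa using hlt
  · intro h x hx
    rw [key x]
    by_cases hy : (fun i : Fin m => x i.castSucc) = (0 : Fin (m + 1 - 1) → ℚ)
    · have hcast : ∀ i : Fin m, x i.castSucc = 0 := fun i => congrFun hy i
      have ht : x (Fin.last m) ≠ 0 := by
        intro ht0
        apply hx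
        funext i
        exact Fin.lastCases ht0 (fun j => hcast j) i
      have hz : dotProduct (fun i : Fin m => x i.castSucc)
          ((Mbar.map (Int.cast : ℤ → ℚ)).mulVec (fun i : Fin m => x i.castSucc)) = 0 := by
        rw [hy]; simp
      rw [hz, hcast a, hcast b]
      have hp : (0 : ℚ) < (x (Fin.last m)) ^ 2 := by positivity
      nlinarith
    · have h1' := h _ hy
      have hsq : (0:ℚ) ≤ (x a.castSucc + x b.castSucc - x (Fin.last m)) ^ 2 := sq_nonneg _
      linarith
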